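/- Let K be a finite group of order l, n ≥ 2, and G = F_n ≀ K the wreath product, with Δ : G → ℤ defined by Δ((f_{k₁},…,f_{k_l})k) = Σ_{i=1}^l ql(f_{k_i}). If g ∈ G is a product of m ≥ 1 commutators [a_1,b_1]⋯[a_m,b_m] with a_i, b_i ∈ G, then |Δ(g)| ≤ 3l(6m - 1). -/

import Mathlib

/-- `tr m` is `-1, 0, 1` according as `m ≡ -1, 0, 1 (mod 3)`. -/
def tr (m : ℤ) : ℤ := if m % 3 = 0 then 0 else if m % 3 = 1 then 1 else -1

/-- `ql w` is the sum of `tr` of the exponents of the syllables in the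
reduced syllable form of `w`: the reduced word `w.toWord` is split into maximal
runs (syllables) of letters with the same generator, and each syllable
`x_i ^ α` contributes `tr α`. -/
def ql {n : ℕ} (w : FreeGroup (Fin n)) : ℤ :=
  ((w.toWord.splitBy (fun p q => p.1 == q.1)).map
    (fun s => tr ((s.map (fun p => if p.2 then (1 : ℤ) else -1)).sum))).sum

/-- The permutation action of `K` on the base group `K → H` of the wreath product
`H ≀ K`, by left translation on the index set: `(k • f) k' = f (k⁻¹ * k')`. -/
def wreathAction (H K : Type*) [Group H] [Group K] : K →* MulAut (K → H) where
  toFun k :=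
    { toFun := fun f x => f (k⁻¹ * x)
      invFun := fun f x => f (k * x)
      left_inv := fun f => by funext x; simp [← mul_assoc]
      right_inv := fun f => by funext x; simp [← mul_assoc]
      map_mul' := fun f g => rfl }
  map_one' := by
    ext f x
    simp
  map_mul' := fun a b => by
    ext f x
    simp [mul_assoc]

/-- The wreath product `H ≀ K = (∏_{k ∈ K} H) ⋊ K`. -/
abbrev WreathProduct (H K : Type*) [Group H] [Group K] :=
  SemidirectProduct (K → H) K (wreathAction H K)

/-- The quasi-homomorphism `Δ : Fₙ ≀ K → ℤ`, `Δ((f_{k₁}, …, f_{k_l})k) = Σᵢ ql(f_{kᵢ})`. -/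
def Δ {n : ℕ} {K : Type*} [Group K] [Fintype K]
    (g : WreathProduct (FreeGroup (Fin n)) K) : ℤ :=
  ∑ k : K, ql (g.left k)

namespace QLP

lemma abs_tr_le (m : ℤ) : |tr m| ≤ 1 := by
  unfold tr; split_ifs <;> simp

lemma tr_neg (m : ℤ) : tr (-m) = - tr m := by
  unfold tr; split_ifs <;> omega

variable {n : ℕ}

def sgn (p : Fin n × Bool) : ℤ := if p.2 then 1 else -1

def wt (s : List (Fin n × Bool)) : ℤ := tr ((s.map sgn).sum)

def qaux : Fin n → ℤ → List (Fin n × Bool) → ℤ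
  | _, acc, [] => tr acc
  | g, acc, p :: l => if p.1 = g then qaux g (acc + sgn p) l else tr acc + qaux p.1 (sgn p) l

def QW : List (Fin n × Bool) → ℤ
  | [] => 0
  | p :: l => qaux p.1 (sgn p) l

lemma loop_wt (l : List (Fin n × Bool)) :
    ∀ (ag : Fin n × Bool) (g : List (Fin n × Bool)) (gs : List (List (Fin n × Bool))),
    ((List.splitBy.loop (fun p q => p.1 == q.1) l ag g gs).map wt).sum
      = ((gs.map wt).sum) + qaux ag.1 ((g.map sgn).sum + sgn ag) l := by
  induction l with
  | nil =>
    intro ag g gs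
    simp [List.splitBy.loop, wt, qaux, List.sum_reverse, add_comm]
  | cons a as ih =>
    intro ag g gs
    by_cases h : ag.1 = a.1
    · have hb : (ag.1 == a.1) = true := by simp [h]
      simp only [List.splitBy.loop, hb, ih]
      have : a.1 = ag.1 := h.symm
      simp [qaux, this, sgn]
      ring_nf
    · have hb : (ag.1 == a.1) = false := by simp [h]
      simp only [List.splitBy.loop, hb, ih]
      have : ¬ (a.1 = ag.1) := fun hh => h hh.symm
      simp [qaux, this, wt, List.sum_reverse, add_comm, add_assoc, add_left_comm]

lemma ql_eq_QW (w : FreeGroup (Fin n)) : ql w = QW w.toWord := by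
  unfold ql
  rcases hw : w.toWord with _ | ⟨p, l⟩
  · simp [QW]
  · show ((List.splitBy _ (p :: l)).map wt).sum = _
    rw [List.splitBy, loop_wt]
    simp [QW]


def st : Fin n → ℤ → List (Fin n × Bool) → Fin n × ℤ
  | g, acc, [] => (g, acc)
  | g, acc, p :: l => if p.1 = g then st g (acc + sgn p) l else st p.1 (sgn p) l

lemma qaux_append (x : List (Fin n × Bool)) :
    ∀ (y : List (Fin n × Bool)) (g : Fin n) (acc : ℤ),
    qaux g acc (x ++ y)
      = qaux g acc x - tr ((st g acc x).2) + qaux (st g acc x).1 ((st g acc x).2) y := by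
  induction x with
  | nil => intro y g acc; simp [qaux, st]
  | cons p l ih =>
    intro y g acc
    by_cases h : p.1 = g
    · simp only [List.cons_append, qaux, st, h, if_true, List.append_eq, ih]
    · simp only [List.cons_append, qaux, st, h, if_false, List.append_eq, ih]
      ring

lemma qaux_shift (l : List (Fin n × Bool)) :
    ∀ g : Fin n, ∃ ρ rest : ℤ, ∀ a : ℤ, qaux g a l = tr (a + ρ) + rest := by
  induction l with
  | nil => intro g; exact ⟨0, 0, by simp [qaux]⟩
  | cons p l ih =>
    intro g
    by_cases h : p.1 = g
    · obtain ⟨ρ, rest, hr⟩ := ih g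
      exact ⟨sgn p + ρ, rest, fun a => by simp [qaux, h, hr, add_assoc]⟩
    · exact ⟨0, qaux p.1 (sgn p) l, fun a => by simp [qaux, h]⟩

lemma st_fst (x : List (Fin n × Bool)) :
    ∀ (g : Fin n) (acc : ℤ), (∃ r, x.getLast? = some r ∧ (st g acc x).1 = r.1)
      ∨ (x = [] ∧ (st g acc x).1 = g) := by
  induction x with
  | nil => intro g acc; right; exact ⟨rfl, rfl⟩
  | cons a l ih =>
    intro g acc
    left
    have hst : st g acc (a :: l)
        = if a.1 = g then st g (acc + sgn a) l else st a.1 (sgn a) l := rfl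
    have hlast : ∀ r : Fin n × Bool, l.getLast? = some r → (a :: l).getLast? = some r := by
      intro r hr
      cases l with
      | nil => simp at hr
      | cons b t => simpa [List.getLast?_cons_cons] using hr
    by_cases h : a.1 = g
    · rcases ih g (acc + sgn a) with ⟨r, hr, he⟩ | ⟨hl, he⟩
      · exact ⟨r, hlast r hr, by rw [hst, if_pos h]; exact he⟩
      · subst hl
        exact ⟨a, rfl, by rw [hst, if_pos h]; exact he.trans h.symm⟩
    · rcases ih a.1 (sgn a) with ⟨r, hr, he⟩ | ⟨hl, he⟩
      · exact ⟨r, hlast r hr, by rw [hst, if_neg h]; exact he⟩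
      · subst hl
        exact ⟨a, rfl, by rw [hst, if_neg h]; exact he⟩

lemma QW_append (x y : List (Fin n × Bool)) :
    ∃ e : ℤ, QW (x ++ y) = QW x + QW y + e ∧ |e| ≤ 3 ∧
      (e ≠ 0 → ∃ p q, x.getLast? = some p ∧ y.head? = some q ∧ p.1 = q.1) := by
  match x, y with
  | [], y => exact ⟨0, by simp [QW], by simp, fun h => absurd rfl h⟩
  | x, [] => exact ⟨0, by simp [QW], by simp, fun h => absurd rfl h⟩
  | p :: x', q :: y' =>
    have key : QW ((p :: x') ++ (q :: y'))
        = QW (p :: x') - tr ((st p.1 (sgn p) x').2)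
          + qaux (st p.1 (sgn p) x').1 ((st p.1 (sgn p) x').2) (q :: y') := by
      show qaux p.1 (sgn p) (x' ++ (q :: y')) = _
      rw [qaux_append]; rfl
    set G := (st p.1 (sgn p) x').1 with hG
    set A := (st p.1 (sgn p) x').2 with hA
    by_cases hq : q.1 = G
    · obtain ⟨ρ, rest, hr⟩ := qaux_shift y' G
      refine ⟨tr (A + sgn q + ρ) - tr A - tr (sgn q + ρ), ?_, ?_, ?_⟩
      · rw [key]
        have h1 : qaux G A (q :: y') = tr (A + sgn q + ρ) + rest := by
          rw [show qaux G A (q :: y')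
              = if q.1 = G then qaux G (A + sgn q) y' else tr A + qaux q.1 (sgn q) y' from rfl,
            if_pos hq, hr]
        have h2 : QW (q :: y') = tr (sgn q + ρ) + rest := by
          show qaux q.1 (sgn q) y' = _
          rw [hq, hr]
        rw [h1, h2]; ring
      · have b1 := abs_tr_le (A + sgn q + ρ)
        have b2 := abs_tr_le A
        have b3 := abs_tr_le (sgn q + ρ)
        rw [abs_le] at *
        constructor <;> [linarith [b1.1, b2.2, b3.2]; linarith [b1.2, b2.1, b3.1]]
      · intro _
        rcases st_fst x' p.1 (sgn p) with ⟨r, hr', he⟩ | ⟨hl, he⟩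
        · refine ⟨r, q, ?_, rfl, by rw [← he, ← hG, hq]⟩
          cases x' with
          | nil => simp at hr'
          | cons b t => simpa [List.getLast?_cons_cons] using hr'
        · subst hl
          exact ⟨p, q, rfl, rfl, by rw [hq, hG, he]⟩
    · refine ⟨0, ?_, by simp, fun h => absurd rfl h⟩
      rw [key]
      have h1 : qaux G A (q :: y') = tr A + QW (q :: y') := by
        rw [show qaux G A (q :: y')
            = if q.1 = G then qaux G (A + sgn q) y' else tr A + qaux q.1 (sgn q) y' from rfl,
          if_neg hq]
        rfl
      rw [h1]; ring


def linv (p : Fin n × Bool) : Fin n × Bool := (p.1, !p.2)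

lemma sgn_linv (p : Fin n × Bool) : sgn (linv p) = - sgn p := by
  cases p with
  | mk g b => cases b <;> simp [sgn, linv]

lemma qaux_map_linv (l : List (Fin n × Bool)) :
    ∀ (g : Fin n) (acc : ℤ), qaux g (-acc) (l.map linv) = - qaux g acc l := by
  induction l with
  | nil => intro g acc; exact tr_neg acc
  | cons p l ih =>
    intro g acc
    have h1 : qaux g (-acc) ((p :: l).map linv)
        = if (linv p).1 = g then qaux g (-acc + sgn (linv p)) (l.map linv)
          else tr (-acc) + qaux (linv p).1 (sgn (linv p)) (l.map linv) := rfl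
    have h2 : qaux g acc (p :: l)
        = if p.1 = g then qaux g (acc + sgn p) l else tr acc + qaux p.1 (sgn p) l := rfl
    by_cases h : p.1 = g
    · rw [h1, h2, if_pos (show (linv p).1 = g from h), if_pos h, sgn_linv]
      have he : -acc + -sgn p = -(acc + sgn p) := by ring
      rw [he, ih]
    · rw [h1, h2, if_neg (show ¬ (linv p).1 = g from h), if_neg h, sgn_linv, ih, tr_neg]
      ring_nf
      rfl

lemma QW_map_linv (L : List (Fin n × Bool)) : QW (L.map linv) = - QW L := by
  cases L with
  | nil => rfl
  | cons p l =>
    show qaux (linv p).1 (sgn (linv p)) (l.map linv) = - qaux p.1 (sgn p) l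
    rw [show (linv p).1 = p.1 from rfl, sgn_linv, qaux_map_linv]

lemma first_run (L : List (Fin n × Bool)) :
    L = [] ∨ ∃ (g : Fin n) (r z : List (Fin n × Bool)), L = r ++ z ∧ r ≠ [] ∧
      (∀ p ∈ r, p.1 = g) ∧ (∀ q, z.head? = some q → q.1 ≠ g) := by
  induction L with
  | nil => exact Or.inl rfl
  | cons p l ih =>
    right
    rcases ih with hl | ⟨g, r, z, h1, h2, h3, h4⟩
    · subst hl
      exact ⟨p.1, [p], [], by simp, by simp, by simp, by simp⟩
    · by_cases h : p.1 = g
      · refine ⟨g, p :: r, z, by simp [h1], by simp, ?_, h4⟩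
        intro q hq
        rcases List.mem_cons.1 hq with hq | hq
        · exact hq ▸ h
        · exact h3 q hq
      · refine ⟨p.1, [p], l, by simp, by simp, by simp, ?_⟩
        intro q hq hq1
        apply h
        rw [← hq1]
        subst h1
        cases r with
        | nil => exact absurd rfl h2
        | cons r0 r' =>
          have hqr : r0 = q := by simpa using hq
          exact hqr ▸ h3 r0 List.mem_cons_self

lemma qaux_run (z : List (Fin n × Bool)) (g : Fin n)
    (hz : ∀ q, z.head? = some q → q.1 ≠ g) :
    ∀ (r : List (Fin n × Bool)), (∀ p ∈ r, p.1 = g) →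
      ∀ acc : ℤ, qaux g acc (r ++ z) = tr (acc + (r.map sgn).sum) + QW z := by
  intro r
  induction r with
  | nil =>
    intro _ acc
    cases z with
    | nil => show tr acc = tr (acc + 0) + 0; simp [qaux]
    | cons q z' =>
      have hq : ¬ q.1 = g := hz q rfl
      show qaux g acc (q :: z') = _
      rw [show qaux g acc (q :: z')
          = if q.1 = g then qaux g (acc + sgn q) z' else tr acc + qaux q.1 (sgn q) z' from rfl,
        if_neg hq]
      show _ = tr (acc + 0) + QW (q :: z')
      rw [add_zero]; rfl
  | cons p r' ih =>
    intro hr acc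
    have hp : p.1 = g := hr p List.mem_cons_self
    show qaux g acc ((p :: (r' ++ z))) = _
    rw [show qaux g acc (p :: (r' ++ z))
        = if p.1 = g then qaux g (acc + sgn p) (r' ++ z)
          else tr acc + qaux p.1 (sgn p) (r' ++ z) from rfl,
      if_pos hp, ih (fun q hq => hr q (List.mem_cons_of_mem p hq))]
    simp [add_assoc]

lemma QW_run_append (g : Fin n) (r z : List (Fin n × Bool)) (hr : r ≠ [])
    (hrg : ∀ p ∈ r, p.1 = g) (hz : ∀ q, z.head? = some q → q.1 ≠ g) :
    QW (r ++ z) = tr ((r.map sgn).sum) + QW z := by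
  cases r with
  | nil => exact absurd rfl hr
  | cons p r' =>
    have hp : p.1 = g := hrg p List.mem_cons_self
    show qaux p.1 (sgn p) (r' ++ z) = _
    rw [hp, qaux_run z g hz r' (fun q hq => hrg q (List.mem_cons_of_mem p hq))]
    simp

lemma QW_reverse : ∀ (N : ℕ) (L : List (Fin n × Bool)), L.length ≤ N →
    QW L.reverse = QW L := by
  intro N
  induction N with
  | zero =>
    intro L hL
    rw [List.length_eq_zero_iff.1 (Nat.le_zero.1 hL)]
    rfl
  | succ N ih =>
    intro L hL
    rcases first_run L with h | ⟨g, r, z, h1, h2, h3, h4⟩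
    · rw [h]; rfl
    · subst h1
      obtain ⟨e, he, _, hcond⟩ := QW_append z.reverse r.reverse
      have he0 : e = 0 := by
        by_contra h0
        obtain ⟨p, q, hp, hq, hpq⟩ := hcond h0
        rw [List.getLast?_reverse] at hp
        rw [List.head?_reverse] at hq
        have hqr : q ∈ r := List.mem_of_mem_getLast? (by rw [hq]; rfl)
        exact h4 p hp (hpq.trans (h3 q hqr))
      have hz : z.length ≤ N := by
        rw [List.length_append] at hL
        cases r with
        | nil => exact absurd rfl h2
        | cons a b => simp only [List.length_cons] at hL; omega
      have hrrev : QW r.reverse = tr ((r.map sgn).sum) := by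
        have := QW_run_append g r.reverse [] (by simpa using h2)
          (fun p hp => h3 p (List.mem_reverse.1 hp)) (by simp)
        simpa [List.sum_reverse, QW] using this
      rw [List.reverse_append, he, he0, add_zero, ih z hz, hrrev,
        QW_run_append g r z h2 h3 h4]
      ring

lemma QW_invRev (L : List (Fin n × Bool)) : QW (FreeGroup.invRev L) = - QW L := by
  show QW ((L.map linv).reverse) = - QW L
  rw [QW_reverse (L.map linv).length _ le_rfl, QW_map_linv]

lemma ql_eq_QW' {w : FreeGroup (Fin n)} : ql w = QW w.toWord := ql_eq_QW w

lemma ql_inv (w : FreeGroup (Fin n)) : ql w⁻¹ = - ql w := by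
  rw [ql_eq_QW, ql_eq_QW, FreeGroup.toWord_inv, QW_invRev]

/-! ### Reduced words -/

def Rdc (L : List (Fin n × Bool)) : Prop :=
  List.Chain' (fun p q => ¬(p.1 = q.1 ∧ p.2 = !q.2)) L

lemma rdc_reduce (L : List (Fin n × Bool)) : Rdc (FreeGroup.reduce L) := by
  induction L with
  | nil => exact List.isChain_nil
  | cons p l ih =>
    rw [FreeGroup.reduce.cons]
    rcases h : FreeGroup.reduce l with _ | ⟨q, t⟩
    · exact List.isChain_singleton _
    · rw [h] at ih
      show Rdc (if p.1 = q.1 ∧ p.2 = !q.2 then t else p :: q :: t)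
      by_cases hc : p.1 = q.1 ∧ p.2 = !q.2
      · rw [if_pos hc]
        exact ih.tail
      · rw [if_neg hc]
        exact List.isChain_cons_cons.2 ⟨hc, ih⟩

lemma rdc_toWord (w : FreeGroup (Fin n)) : Rdc w.toWord := by
  rw [← FreeGroup.reduce_toWord]
  exact rdc_reduce _

lemma reduce_of_rdc {L : List (Fin n × Bool)} (h : Rdc L) : FreeGroup.reduce L = L := by
  induction L with
  | nil => rfl
  | cons p l ih =>
    rw [FreeGroup.reduce.cons, ih h.tail]
    cases l with
    | nil => rfl
    | cons q t =>
      have hc : ¬(p.1 = q.1 ∧ p.2 = !q.2) := (List.isChain_cons_cons.1 h).1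
      show (if p.1 = q.1 ∧ p.2 = !q.2 then t else p :: q :: t) = p :: q :: t
      rw [if_neg hc]

lemma invRev_cons (y : Fin n × Bool) (c : List (Fin n × Bool)) :
    FreeGroup.invRev (y :: c) = FreeGroup.invRev c ++ [(y.1, !y.2)] := by
  simp [FreeGroup.invRev]

lemma decomp : ∀ (N : ℕ) (u v : List (Fin n × Bool)), u.length ≤ N → Rdc u → Rdc v →
    ∃ a c b : List (Fin n × Bool), u = a ++ FreeGroup.invRev c ∧ v = c ++ b ∧ Rdc (a ++ b) ∧
      FreeGroup.reduce (u ++ v) = a ++ b := by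
  intro N
  induction N with
  | zero =>
    intro u v hu hru hrv
    rw [List.length_eq_zero_iff.1 (Nat.le_zero.1 hu)]
    exact ⟨[], [], v, by simp [FreeGroup.invRev], rfl, hrv, by simpa using reduce_of_rdc hrv⟩
  | succ N ih =>
    intro u v hu hru hrv
    rcases List.eq_nil_or_concat u with h | ⟨u', x, hux⟩
    · subst h
      exact ⟨[], [], v, by simp [FreeGroup.invRev], rfl, hrv, by simpa using reduce_of_rdc hrv⟩
    · rw [List.concat_eq_append] at hux
      subst hux
      cases v with
      | nil =>
        exact ⟨u' ++ [x], [], [], by simp [FreeGroup.invRev], rfl, by simpa using hru,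
          by simpa using reduce_of_rdc hru⟩
      | cons y v' =>
        by_cases hxy : x = (y.1, !y.2)
        · have hru' : Rdc u' := (List.isChain_append.1 hru).1
          have hrv' : Rdc v' := hrv.tail
          have hlen : u'.length ≤ N := by
            rw [List.length_append] at hu; simp at hu; omega
          obtain ⟨a, c, b, h1, h2, h3, h4⟩ := ih u' v' hlen hru' hrv'
          refine ⟨a, y :: c, b, ?_, ?_, h3, ?_⟩
          · rw [invRev_cons, ← List.append_assoc, ← h1, hxy]
          · rw [h2]; rfl
          · have h5 : ((u' ++ [x]) ++ y :: v') = u' ++ ((y.1, !y.2) :: (y.1, !(!y.2)) :: v') := by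
              rw [hxy]; simp
            have hstep : FreeGroup.Red.Step ((u' ++ [x]) ++ y :: v') (u' ++ v') := by
              rw [h5]; exact FreeGroup.Red.Step.not
            rw [FreeGroup.reduce.Step.eq hstep, h4]
        · have hrall : Rdc ((u' ++ [x]) ++ y :: v') := by
            apply List.isChain_append.2
            refine ⟨hru, hrv, ?_⟩
            intro p hp q hq
            rw [List.getLast?_concat] at hp
            have hpx : p = x := Eq.symm (by simpa using hp)
            have hqy : q = y := Eq.symm (by simpa using hq)
            subst hpx; subst hqy
            rintro ⟨e1, e2⟩
            exact hxy (Prod.ext e1 e2)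
          exact ⟨u' ++ [x], [], y :: v', by simp [FreeGroup.invRev], rfl, hrall,
            reduce_of_rdc hrall⟩

lemma bool_resolve {s t : Bool} (h : ¬ s = !t) : s = t := by
  cases s <;> cases t <;> simp_all

lemma invRev_head? {c : List (Fin n × Bool)} {q : Fin n × Bool}
    (h : (FreeGroup.invRev c).head? = some q) :
    ∃ r, c.getLast? = some r ∧ q = (r.1, !r.2) := by
  rw [show FreeGroup.invRev c = (c.map linv).reverse from rfl, List.head?_reverse,
    List.getLast?_map] at h
  rcases hr : c.getLast? with _ | r
  · rw [hr] at h; simp at h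
  · rw [hr] at h
    exact ⟨r, rfl, by simpa [linv] using h.symm⟩

lemma ql_mul (x y : FreeGroup (Fin n)) :
    ∃ e : ℤ, ql (x * y) = ql x + ql y + e ∧ |e| ≤ 3 := by
  obtain ⟨a, c, b, h1, h2, h3, h4⟩ :=
    decomp x.toWord.length x.toWord y.toWord le_rfl (rdc_toWord x) (rdc_toWord y)
  have hmulWord : (x * y).toWord = a ++ b := by
    conv_lhs => rw [← FreeGroup.mk_toWord (x := x), ← FreeGroup.mk_toWord (x := y)]
    rw [FreeGroup.mul_mk, FreeGroup.toWord_mk, h4]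
  obtain ⟨e1, he1, hb1, hc1⟩ := QW_append a (FreeGroup.invRev c)
  obtain ⟨e2, he2, hb2, hc2⟩ := QW_append c b
  obtain ⟨e3, he3, hb3, hc3⟩ := QW_append a b
  have hx : ql x = QW a + QW (FreeGroup.invRev c) + e1 := by rw [ql_eq_QW, h1, he1]
  have hy : ql y = QW c + QW b + e2 := by rw [ql_eq_QW, h2, he2]
  have hxy : ql (x * y) = QW a + QW b + e3 := by rw [ql_eq_QW, hmulWord, he3]
  have hic : QW (FreeGroup.invRev c) = - QW c := QW_invRev c
  have hbu : ∀ p ∈ a.getLast?, ∀ q ∈ (FreeGroup.invRev c).head?,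
      ¬(p.1 = q.1 ∧ p.2 = !q.2) := by
    have := h1 ▸ rdc_toWord x
    exact (List.isChain_append.1 this).2.2
  have hbv : ∀ p ∈ c.getLast?, ∀ q ∈ b.head?, ¬(p.1 = q.1 ∧ p.2 = !q.2) := by
    have := h2 ▸ rdc_toWord y
    exact (List.isChain_append.1 this).2.2
  have hbab : ∀ p ∈ a.getLast?, ∀ q ∈ b.head?, ¬(p.1 = q.1 ∧ p.2 = !q.2) :=
    (List.isChain_append.1 h3).2.2
  have bres : ∀ {s t : Bool}, ¬ s = t → s = !t := by
    intro s t h; cases s <;> cases t <;> simp_all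
  have ex12 : ¬(e1 ≠ 0 ∧ e2 ≠ 0) := by
    rintro ⟨z1, z2⟩
    obtain ⟨p1, q1, ha1, hic1, hg1⟩ := hc1 z1
    obtain ⟨p2, q2, hcl, hbh, hg2⟩ := hc2 z2
    obtain ⟨r, hr, hq1⟩ := invRev_head? hic1
    subst hq1
    have hp2r : p2 = r := by rw [hcl] at hr; exact Option.some.inj hr
    subst hp2r
    have hu1 := hbu p1 (by rw [ha1]; rfl) (p2.1, !p2.2) (by rw [hic1]; rfl)
    have hs1 : p1.2 = !p2.2 := by
      apply bres
      intro hs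
      exact hu1 ⟨hg1, by simpa using hs⟩
    have hv1 := hbv p2 (by rw [hcl]; rfl) q2 (by rw [hbh]; rfl)
    have hs2 : p2.2 = q2.2 := by
      by_contra hs
      exact hv1 ⟨hg2, bres hs⟩
    exact hbab p1 (by rw [ha1]; rfl) q2 (by rw [hbh]; rfl)
      ⟨hg1.trans hg2, by rw [hs1, hs2]⟩
  have ex13 : ¬(e1 ≠ 0 ∧ e3 ≠ 0) := by
    rintro ⟨z1, z3⟩
    obtain ⟨p1, q1, ha1, hic1, hg1⟩ := hc1 z1
    obtain ⟨p3, q3, ha3, hbh, hg3⟩ := hc3 z3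
    obtain ⟨r, hr, hq1⟩ := invRev_head? hic1
    subst hq1
    have hp13 : p1 = p3 := by rw [ha1] at ha3; exact Option.some.inj ha3
    subst hp13
    have hu1 := hbu p1 (by rw [ha1]; rfl) (r.1, !r.2) (by rw [hic1]; rfl)
    have hs1 : p1.2 = !r.2 := by
      apply bres
      intro hs
      exact hu1 ⟨hg1, by simpa using hs⟩
    have hv1 := hbv r (by rw [hr]; rfl) q3 (by rw [hbh]; rfl)
    have hs2 : r.2 = q3.2 := by
      by_contra hs
      exact hv1 ⟨(hg1.symm.trans hg3 : r.1 = q3.1), bres hs⟩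
    exact hbab p1 (by rw [ha1]; rfl) q3 (by rw [hbh]; rfl)
      ⟨hg3, by rw [hs1, hs2]⟩
  have ex23 : ¬(e2 ≠ 0 ∧ e3 ≠ 0) := by
    rintro ⟨z2, z3⟩
    obtain ⟨p2, q2, hcl, hbh, hg2⟩ := hc2 z2
    obtain ⟨p3, q3, ha3, hbh3, hg3⟩ := hc3 z3
    have hq23 : q2 = q3 := by rw [hbh] at hbh3; exact Option.some.inj hbh3
    subst hq23
    have hs2 : p2.2 = q2.2 := by
      by_contra hs
      exact hbv p2 (by rw [hcl]; rfl) q2 (by rw [hbh]; rfl) ⟨hg2, bres hs⟩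
    -- invRev c has head (p2.1, !p2.2)
    have hic1 : (FreeGroup.invRev c).head? = some (p2.1, !p2.2) := by
      rw [show FreeGroup.invRev c = (c.map linv).reverse from rfl, List.head?_reverse,
        List.getLast?_map, hcl]
      rfl
    have hu1 := hbu p3 (by rw [ha3]; rfl) (p2.1, !p2.2) (by rw [hic1]; rfl)
    have hs3 : p3.2 = !p2.2 := by
      apply bres
      intro hs
      exact hu1 ⟨hg3.trans hg2.symm, by simpa using hs⟩
    exact hbab p3 (by rw [ha3]; rfl) q2 (by rw [hbh]; rfl)
      ⟨hg3, by rw [hs3, hs2]⟩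
  refine ⟨e3 - e1 - e2, by rw [hx, hy, hxy, hic]; ring, ?_⟩
  by_cases z1 : e1 = 0 <;> by_cases z2 : e2 = 0 <;> by_cases z3 : e3 = 0
  · simp [z1, z2, z3]
  · simpa [z1, z2] using hb3
  · simp only [z1, z3]
    rw [show (0:ℤ) - 0 - e2 = -e2 by ring, abs_neg]
    exact hb2
  · exact absurd ⟨z2, z3⟩ ex23
  · simp only [z2, z3]
    rw [show (0:ℤ) - e1 - 0 = -e1 by ring, abs_neg]
    exact hb1
  · exact absurd ⟨z1, z3⟩ ex13
  · exact absurd ⟨z1, z2⟩ ex12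
  · exact absurd ⟨z1, z2⟩ ex12



variable {n : ℕ} {K : Type*} [Group K] [Fintype K]

lemma delta_mul (x y : WreathProduct (FreeGroup (Fin n)) K) :
    |Δ (x * y) - Δ x - Δ y| ≤ 3 * (Fintype.card K : ℤ) := by
  have hleft : ∀ k : K, (x * y).left k = x.left k * y.left (x.right⁻¹ * k) := fun k => rfl
  choose e he hb using fun k : K => ql_mul (x.left k) (y.left (x.right⁻¹ * k))
  have h1 : Δ (x * y) = Δ x + (∑ k : K, ql (y.left (x.right⁻¹ * k))) + ∑ k : K, e k := by
    unfold Δ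
    rw [← Finset.sum_add_distrib, ← Finset.sum_add_distrib]
    apply Finset.sum_congr rfl
    intro k _
    rw [hleft k, he k]
  have h2 : (∑ k : K, ql (y.left (x.right⁻¹ * k))) = Δ y :=
    Fintype.sum_equiv (Equiv.mulLeft x.right⁻¹) _ _ (fun k => rfl)
  rw [h1, h2, show Δ x + Δ y + (∑ k : K, e k) - Δ x - Δ y = ∑ k : K, e k by ring]
  calc |∑ k : K, e k| ≤ ∑ k : K, |e k| := Finset.abs_sum_le_sum_abs _ _
    _ ≤ ∑ _k : K, (3 : ℤ) := Finset.sum_le_sum (fun k _ => hb k)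
    _ = 3 * (Fintype.card K : ℤ) := by
        rw [Finset.sum_const, Finset.card_univ, nsmul_eq_mul]; ring

lemma delta_inv (x : WreathProduct (FreeGroup (Fin n)) K) : Δ x⁻¹ = - Δ x := by
  have hleft : ∀ k : K, (x⁻¹).left k = (x.left (x.right * k))⁻¹ := by
    intro k
    show (x.left⁻¹) (x.right⁻¹⁻¹ * k) = _
    rw [inv_inv]; rfl
  unfold Δ
  have h1 : ∀ k : K, ql (x⁻¹.left k) = - ql (x.left (x.right * k)) := by
    intro k; rw [hleft k, ql_inv]
  calc ∑ k : K, ql (x⁻¹.left k) = ∑ k : K, - ql (x.left (x.right * k)) :=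
        Finset.sum_congr rfl (fun k _ => h1 k)
    _ = - ∑ k : K, ql (x.left (x.right * k)) := by simp
    _ = - ∑ k : K, ql (x.left k) := by
        rw [Fintype.sum_equiv (Equiv.mulLeft x.right)
          (fun k => ql (x.left (x.right * k))) (fun k => ql (x.left k)) (fun k => rfl)]

lemma delta_prod : ∀ (L : List (WreathProduct (FreeGroup (Fin n)) K)), L ≠ [] →
    |Δ L.prod - (L.map Δ).sum| ≤ 3 * (Fintype.card K : ℤ) * ((L.length : ℤ) - 1) := by
  intro L
  induction L with
  | nil => intro h; exact absurd rfl h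
  | cons x l ih =>
    intro _
    cases l with
    | nil => simp
    | cons y t =>
      have hl : (y :: t) ≠ [] := by simp
      have ihl := ih hl
      have hm := delta_mul x (y :: t).prod
      have hK : (0 : ℤ) ≤ (Fintype.card K : ℤ) := Int.natCast_nonneg _
      rw [List.prod_cons]
      rw [abs_le] at *
      have hlen : ((x :: y :: t).length : ℤ) = ((y :: t).length : ℤ) + 1 := by
        simp
      constructor
      · rw [List.map_cons, List.sum_cons, hlen]
        linarith [ihl.1, hm.1]
      · rw [List.map_cons, List.sum_cons, hlen]
        linarith [ihl.2, hm.2]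

lemma delta_comm (a b : WreathProduct (FreeGroup (Fin n)) K) :
    |Δ (a⁻¹ * b⁻¹ * a * b)| ≤ 9 * (Fintype.card K : ℤ) := by
  have d1 := delta_mul a⁻¹ b⁻¹
  have d2 := delta_mul (a⁻¹ * b⁻¹) a
  have d3 := delta_mul (a⁻¹ * b⁻¹ * a) b
  have i1 := delta_inv a
  have i2 := delta_inv b
  rw [abs_le] at d1 d2 d3 ⊢
  constructor <;> linarith [d1.1, d1.2, d2.1, d2.2, d3.1, d3.2]

end QLP

/-- If `g ∈ Fₙ ≀ K` is a product of `m ≥ 1` commutators then `|Δ(g)| ≤ 3l(6m - 1)`,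
where `l = |K|`. -/
theorem delta_prod_commutators (n : ℕ) (hn : 2 ≤ n) (K : Type*) [Group K] [Fintype K]
    (m : ℕ) (hm : 1 ≤ m) (g : WreathProduct (FreeGroup (Fin n)) K)
    (a b : Fin m → WreathProduct (FreeGroup (Fin n)) K)
    (hg : g = (List.ofFn fun i => (a i)⁻¹ * (b i)⁻¹ * a i * b i).prod) :
    |Δ g| ≤ 3 * (Fintype.card K : ℤ) * (6 * (m : ℤ) - 1) := by
  subst hg
  set L : List (WreathProduct (FreeGroup (Fin n)) K) :=
    List.ofFn fun i => (a i)⁻¹ * (b i)⁻¹ * a i * b i with hL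
  have hlen : L.length = m := by simp [hL]
  have hLne : L ≠ [] := by
    intro h
    rw [h] at hlen
    simp at hlen
    omega
  have h1 := QLP.delta_prod L hLne
  have h2 : |(L.map Δ).sum| ≤ 9 * (Fintype.card K : ℤ) * m := by
    have hmap : L.map Δ = List.ofFn fun i => Δ ((a i)⁻¹ * (b i)⁻¹ * a i * b i) := by
      rw [hL, List.map_ofFn]; rfl
    rw [hmap, List.sum_ofFn]
    calc |∑ i : Fin m, Δ ((a i)⁻¹ * (b i)⁻¹ * a i * b i)|
        ≤ ∑ i : Fin m, |Δ ((a i)⁻¹ * (b i)⁻¹ * a i * b i)| := Finset.abs_sum_le_sum_abs _ _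
      _ ≤ ∑ _i : Fin m, 9 * (Fintype.card K : ℤ) :=
          Finset.sum_le_sum (fun i _ => QLP.delta_comm (a i) (b i))
      _ = 9 * (Fintype.card K : ℤ) * m := by
          rw [Finset.sum_const, Finset.card_univ, nsmul_eq_mul, Fintype.card_fin]; ring
  rw [hlen] at h1
  have hK : (0 : ℤ) ≤ (Fintype.card K : ℤ) := Int.natCast_nonneg _
  have hm' : (1 : ℤ) ≤ (m : ℤ) := by exact_mod_cast hm
  have habs := abs_sub_abs_le_abs_sub (Δ L.prod) ((L.map Δ).sum)
  have hKm : 0 ≤ (Fintype.card K : ℤ) * ((m : ℤ) - 1) :=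
    mul_nonneg hK (by linarith)
  have hKm2 : 0 ≤ (Fintype.card K : ℤ) * (m : ℤ) := by positivity
  nlinarith [abs_nonneg (Δ L.prod - (L.map Δ).sum),
    abs_sub_abs_le_abs_sub (Δ L.prod) ((L.map Δ).sum)]
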